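/- arXiv:1810.07299 — 5 statements merged into one kernel-verified Lean document; each statement's English description precedes it below -/
import Mathlib

section
/- Let n ≥ 2 and let ζ be a primitive n-th root of unity in ℂ. Then the sum over i from 1 to n−1 of 1/((1 − ζ^i)(1 − ζ^{−i})) equals (n² − 1)/12. -/
lemma aux_geomzero (n : ℕ) (w : ℂ) (hw : w ^ n = 1) (hw1 : w ≠ 1) :
    ∑ k ∈ Finset.range n, w ^ k = 0 := by
  rw [geom_sum_eq hw1, hw]; simp

lemma aux_sum_kk (n : ℕ) :
    ∑ k ∈ Finset.range n, (k : ℂ) * ((k : ℂ) - 1) = n * (n - 1) * (n - 2) / 3 := by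
  induction n with
  | zero => simp
  | succ m ih => rw [Finset.sum_range_succ, ih]; push_cast; ring

lemma aux_identI (n : ℕ) (w : ℂ) :
    (w - 1) ^ 2 * ∑ k ∈ Finset.range n, (k : ℂ) * ((k : ℂ) - 1) * w ^ k
      + 2 * n * w ^ (n + 1) - n * (n - 1) * w ^ n * (w - 1)
    = 2 * w ^ 2 * ∑ k ∈ Finset.range n, w ^ k := by
  induction n with
  | zero => simp
  | succ m ih =>
    rw [Finset.sum_range_succ, Finset.sum_range_succ]
    push_cast
    ring_nf
    ring_nf at ih
    linear_combination ih

lemma aux_identI' (n : ℕ) (w : ℂ) (hw : w ^ n = 1) (hw1 : w ≠ 1) :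
    (w - 1) ^ 2 * ∑ k ∈ Finset.range n, (k : ℂ) * ((k : ℂ) - 1) * w ^ k
      = n * (n - 1) * (w - 1) - 2 * n * w := by
  have h0 := aux_geomzero n w hw hw1
  have h1 := aux_identI n w
  rw [h0, pow_succ] at h1
  linear_combination h1 + ((n : ℂ) * (n - 1) * (w - 1) - 2 * n * w) * hw

lemma aux_perterm (n : ℕ) (hn : 2 ≤ n) (w : ℂ) (hw : w ^ n = 1) (hw1 : w ≠ 1) (hw0 : w ≠ 0) :
    1 / ((1 - w) * (1 - w⁻¹))
      = (∑ k ∈ Finset.range n, (k : ℂ) * ((k : ℂ) - 1) * w ^ k) / (2 * n)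
        - (n - 1) / (2 * (w - 1)) := by
  have key := aux_identI' n w hw hw1
  have hn0 : (n : ℂ) ≠ 0 := Nat.cast_ne_zero.mpr (by omega)
  have hws : w - 1 ≠ 0 := sub_ne_zero.mpr hw1
  have hwi : 1 - w⁻¹ ≠ 0 := by
    intro h
    apply hw1
    have : w⁻¹ = 1 := by linear_combination -h
    field_simp at this
    exact this.symm
  have hw1' : 1 - w ≠ 0 := fun h => hw1 (by linear_combination -h)
  have h2 : 1 / ((1 - w) * (1 - w⁻¹)) = -w / (w - 1) ^ 2 := by
    rw [div_eq_div_iff (mul_ne_zero hw1' hwi) (pow_ne_zero 2 hws)]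
    field_simp
    ring
  rw [h2]
  field_simp
  linear_combination (-1 : ℂ) * key

lemma aux_pairlem (w v : ℂ) (h : w * v = 1) (hw : w ≠ 1) (hv : v ≠ 1) :
    1 / (w - 1) + 1 / (v - 1) = -1 := by
  have hw' : w - 1 ≠ 0 := sub_ne_zero.mpr hw
  have hv' : v - 1 ≠ 0 := sub_ne_zero.mpr hv
  field_simp
  linear_combination h

lemma aux_sumA (n : ℕ) (hn : 2 ≤ n) (ζ : ℂ) (hζ : IsPrimitiveRoot ζ n) :
    ∑ i ∈ Finset.Icc 1 (n - 1), 1 / (ζ ^ i - 1) = -((n : ℂ) - 1) / 2 := by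
  have hne1 : ∀ i, 1 ≤ i → i ≤ n - 1 → ζ ^ i ≠ 1 := by
    intro i h1 h2
    exact hζ.pow_ne_one_of_pos_of_lt (by omega) (by omega)
  set f : ℕ → ℂ := fun i => 1 / (ζ ^ i - 1) with hf
  have hIccIco : Finset.Icc 1 (n - 1) = Finset.Ico 1 n := by
    ext x; simp only [Finset.mem_Icc, Finset.mem_Ico]; omega
  have h1 : ∑ i ∈ Finset.Icc 1 (n - 1), f i = ∑ j ∈ Finset.range (n - 1), f (1 + j) := by
    rw [hIccIco, Finset.sum_Ico_eq_sum_range]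
  have h2 : ∑ j ∈ Finset.range (n - 1), f (1 + (n - 1 - 1 - j)) = ∑ j ∈ Finset.range (n - 1), f (1 + j) :=
    Finset.sum_range_reflect (fun j => f (1 + j)) (n - 1)
  have pair : ∀ j ∈ Finset.range (n - 1), f (1 + j) + f (1 + (n - 1 - 1 - j)) = -1 := by
    intro j hj
    rw [Finset.mem_range] at hj
    have hab : (1 + j) + (1 + (n - 1 - 1 - j)) = n := by omega
    have hwv : ζ ^ (1 + j) * ζ ^ (1 + (n - 1 - 1 - j)) = 1 := by
      rw [← pow_add, hab]; exact hζ.pow_eq_one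
    exact aux_pairlem _ _ hwv (hne1 _ (by omega) (by omega)) (hne1 _ (by omega) (by omega))
  have hcast : ((n - 1 : ℕ) : ℂ) = (n : ℂ) - 1 := by
    push_cast [Nat.cast_sub (by omega : 1 ≤ n)]; ring
  have hsum : (2 : ℂ) * ∑ i ∈ Finset.Icc 1 (n - 1), f i = -((n : ℂ) - 1) := by
    rw [h1]
    calc (2 : ℂ) * ∑ j ∈ Finset.range (n - 1), f (1 + j)
        = ∑ j ∈ Finset.range (n - 1), f (1 + j) + ∑ j ∈ Finset.range (n - 1), f (1 + (n - 1 - 1 - j)) := by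
          rw [h2]; ring
      _ = ∑ j ∈ Finset.range (n - 1), (f (1 + j) + f (1 + (n - 1 - 1 - j))) := by
          rw [Finset.sum_add_distrib]
      _ = ∑ j ∈ Finset.range (n - 1), (-1 : ℂ) := Finset.sum_congr rfl pair
      _ = -((n : ℂ) - 1) := by
          rw [Finset.sum_const, nsmul_eq_mul, Finset.card_range, hcast]; ring
  linear_combination hsum / 2

lemma aux_sumC (n : ℕ) (hn : 2 ≤ n) (ζ : ℂ) (hζ : IsPrimitiveRoot ζ n) (k : ℕ)
    (hk1 : 1 ≤ k) (hk2 : k ≤ n - 1) :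
    ∑ i ∈ Finset.Icc 1 (n - 1), (ζ ^ k) ^ i = -1 := by
  have hins : Finset.range n = insert 0 (Finset.Icc 1 (n - 1)) := by
    ext x
    simp only [Finset.mem_range, Finset.mem_insert, Finset.mem_Icc]
    omega
  have hne1 : ζ ^ k ≠ 1 := hζ.pow_ne_one_of_pos_of_lt (by omega) (by omega)
  have hpow : (ζ ^ k) ^ n = 1 := by
    rw [← pow_mul, mul_comm, pow_mul, hζ.pow_eq_one, one_pow]
  have h0 := aux_geomzero n (ζ ^ k) hpow hne1
  rw [hins, Finset.sum_insert (by simp)] at h0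
  simp only [pow_zero] at h0
  linear_combination h0

theorem stmt_3 (n : ℕ) (hn : 2 ≤ n) (ζ : ℂ) (hζ : IsPrimitiveRoot ζ n) :
    ∑ i ∈ Finset.Icc 1 (n - 1), 1 / ((1 - ζ ^ i) * (1 - (ζ ^ i)⁻¹)) =
      ((n : ℂ) ^ 2 - 1) / 12 := by
  have hn0 : (n : ℂ) ≠ 0 := Nat.cast_ne_zero.mpr (by omega)
  have hz0 : ζ ≠ 0 := hζ.ne_zero (by omega)
  -- step 1: per-term rewrite
  have step1 : ∑ i ∈ Finset.Icc 1 (n - 1), 1 / ((1 - ζ ^ i) * (1 - (ζ ^ i)⁻¹))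
      = ∑ i ∈ Finset.Icc 1 (n - 1),
          ((∑ k ∈ Finset.range n, (k : ℂ) * ((k : ℂ) - 1) * (ζ ^ i) ^ k) / (2 * n)
            - ((n : ℂ) - 1) / (2 * (ζ ^ i - 1))) := by
    apply Finset.sum_congr rfl
    intro i hi
    rw [Finset.mem_Icc] at hi
    have hw1 : ζ ^ i ≠ 1 := hζ.pow_ne_one_of_pos_of_lt (by omega) (by omega)
    have hwn : (ζ ^ i) ^ n = 1 := by
      rw [← pow_mul, mul_comm, pow_mul, hζ.pow_eq_one, one_pow]
    exact aux_perterm n hn (ζ ^ i) hwn hw1 (pow_ne_zero i hz0)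
  rw [step1, Finset.sum_sub_distrib]
  -- step 2: double sum
  have step2 : ∑ i ∈ Finset.Icc 1 (n - 1),
      (∑ k ∈ Finset.range n, (k : ℂ) * ((k : ℂ) - 1) * (ζ ^ i) ^ k) / (2 * n)
      = -((n : ℂ) * (n - 1) * (n - 2) / 3) / (2 * n) := by
    rw [← Finset.sum_div]
    congr 1
    rw [Finset.sum_comm]
    have inner : ∀ k ∈ Finset.range n,
        ∑ i ∈ Finset.Icc 1 (n - 1), (k : ℂ) * ((k : ℂ) - 1) * (ζ ^ i) ^ k
          = (k : ℂ) * ((k : ℂ) - 1) * (-1) := by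
      intro k hk
      rw [Finset.mem_range] at hk
      rw [← Finset.mul_sum]
      rcases Nat.eq_zero_or_pos k with h0 | hpos
      · subst h0; simp
      · congr 1
        have : ∀ i, (ζ ^ i) ^ k = (ζ ^ k) ^ i := by
          intro i; rw [← pow_mul, mul_comm, pow_mul]
        rw [Finset.sum_congr rfl fun i _ => this i]
        exact aux_sumC n hn ζ hζ k (by omega) (by omega)
    rw [Finset.sum_congr rfl inner]
    have := aux_sum_kk n
    calc ∑ k ∈ Finset.range n, (k : ℂ) * ((k : ℂ) - 1) * (-1)
        = -∑ k ∈ Finset.range n, (k : ℂ) * ((k : ℂ) - 1) := by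
          rw [← Finset.sum_neg_distrib]; apply Finset.sum_congr rfl; intros; ring
      _ = -((n : ℂ) * (n - 1) * (n - 2) / 3) := by rw [this]
  -- step 3: second sum
  have step3 : ∑ i ∈ Finset.Icc 1 (n - 1), ((n : ℂ) - 1) / (2 * (ζ ^ i - 1))
      = (((n : ℂ) - 1) / 2) * (-((n : ℂ) - 1) / 2) := by
    have : ∀ i, ((n : ℂ) - 1) / (2 * (ζ ^ i - 1)) = (((n : ℂ) - 1) / 2) * (1 / (ζ ^ i - 1)) := by
      intro i; field_simp
    rw [Finset.sum_congr rfl fun i _ => this i, ← Finset.mul_sum, aux_sumA n hn ζ hζ]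
  rw [step2, step3]
  field_simp
  ring
end

section
/- Let R be a commutative ring, n ≥ 2, and M an n×n matrix over R. For any indices i ≠ k and j ≠ ℓ, the determinant of the 2×2 matrix [[N_{i,j}, N_{i,ℓ}], [N_{k,j}, N_{k,ℓ}]], where N = adj(M) is the adjugate of M, is divisible in R by det(M). -/
open Matrix Finset Equiv

/-- Determinant of a matrix that is `d • 1` except for two special columns. -/
lemma aux_det_special {R : Type*} [CommRing R] {n : ℕ} {j l : Fin n} (hjl : j ≠ l)
    (x y : Fin n → R) (d : R) :
    (Matrix.of fun m b : Fin n => if b = j then x m else if b = l then y m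
      else if m = b then d else 0).det
      = d ^ (n - 2) * (x j * y l - x l * y j) := by
  set A : Matrix (Fin n) (Fin n) R := Matrix.of fun m b : Fin n =>
    if b = j then x m else if b = l then y m else if m = b then d else 0 with hA
  have hswap : (Equiv.swap j l : Equiv.Perm (Fin n)) ≠ 1 := by
    simpa [Equiv.swap_eq_one_iff] using hjl
  rw [Matrix.det_apply]
  have hzero : ∀ σ ∈ (univ : Finset (Equiv.Perm (Fin n))),
      σ ∉ ({1, Equiv.swap j l} : Finset (Equiv.Perm (Fin n))) →
      (Equiv.Perm.sign σ • ∏ m, A (σ m) m) = 0 := by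
    intro σ _ hσ
    simp only [Finset.mem_insert, Finset.mem_singleton, not_or] at hσ
    obtain ⟨h1, h2⟩ := hσ
    have hm : ∃ m : Fin n, m ≠ j ∧ m ≠ l ∧ σ m ≠ m := by
      by_contra h
      push_neg at h
      have hfix : ∀ m : Fin n, m ≠ j → m ≠ l → σ m = m := h
      have hσj : σ j = j ∨ σ j = l := by
        by_contra hc
        push_neg at hc
        have := hfix (σ j) hc.1 hc.2
        exact hc.1 (σ.injective this)
      have hσl : σ l = j ∨ σ l = l := by
        by_contra hc
        push_neg at hc
        have := hfix (σ l) hc.1 hc.2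
        exact hc.2 (σ.injective this)
      rcases hσj with hj | hj
      · have hl : σ l = l := by
          rcases hσl with h' | h'
          · exact absurd (σ.injective (h'.trans hj.symm)) hjl.symm
          · exact h'
        exact h1 (Equiv.ext fun m => by
          rcases eq_or_ne m j with rfl | hmj
          · exact hj
          rcases eq_or_ne m l with rfl | hml
          · exact hl
          · exact hfix m hmj hml)
      · have hl : σ l = j := by
          rcases hσl with h' | h'
          · exact h'
          · exact absurd (σ.injective (hj.trans h'.symm)) hjl
        exact h2 (Equiv.ext fun m => by
          rcases eq_or_ne m j with rfl | hmj
          · simpa [Equiv.swap_apply_left] using hj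
          rcases eq_or_ne m l with rfl | hml
          · simpa [Equiv.swap_apply_right] using hl
          · rw [hfix m hmj hml, Equiv.swap_apply_of_ne_of_ne hmj hml])
    obtain ⟨m, hmj, hml, hsm⟩ := hm
    have hAm : A (σ m) m = 0 := by simp [hA, hmj, hml, hsm]
    have h0 : (∏ m, A (σ m) m) = 0 := Finset.prod_eq_zero (Finset.mem_univ m) hAm
    rw [h0, smul_zero]
  rw [← Finset.sum_subset (Finset.subset_univ ({1, Equiv.swap j l} : Finset (Equiv.Perm (Fin n))))
    (fun σ hσu hσ => hzero σ hσu hσ)]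
  have hlmem : l ∈ (univ : Finset (Fin n)).erase j :=
    Finset.mem_erase.mpr ⟨hjl.symm, Finset.mem_univ l⟩
  have hcard : (((univ : Finset (Fin n)).erase j).erase l).card = n - 2 := by
    rw [Finset.card_erase_of_mem hlmem,
      Finset.card_erase_of_mem (Finset.mem_univ j), Finset.card_univ, Fintype.card_fin,
      Nat.sub_sub]
  have hrest : ∀ m ∈ ((univ : Finset (Fin n)).erase j).erase l, A m m = d := by
    intro m hm
    have hml : m ≠ l := (Finset.mem_erase.mp hm).1
    have hmj : m ≠ j := (Finset.mem_erase.mp (Finset.mem_erase.mp hm).2).1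
    simp [hA, hmj, hml]
  have hconst1 : (∏ m ∈ ((univ : Finset (Fin n)).erase j).erase l, A m m) = d ^ (n - 2) := by
    rw [Finset.prod_congr rfl hrest, Finset.prod_const, hcard]
  have hrest2 : ∀ m ∈ ((univ : Finset (Fin n)).erase j).erase l,
      A (Equiv.swap j l m) m = d := by
    intro m hm
    have hml : m ≠ l := (Finset.mem_erase.mp hm).1
    have hmj : m ≠ j := (Finset.mem_erase.mp (Finset.mem_erase.mp hm).2).1
    rw [Equiv.swap_apply_of_ne_of_ne hmj hml]
    exact hrest m hm
  have hconst2 : (∏ m ∈ ((univ : Finset (Fin n)).erase j).erase l, A (Equiv.swap j l m) m)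
      = d ^ (n - 2) := by
    rw [Finset.prod_congr rfl hrest2, Finset.prod_const, hcard]
  have hprod1 : (∏ m, A m m) = x j * (y l * d ^ (n - 2)) := by
    rw [← Finset.mul_prod_erase univ _ (Finset.mem_univ j),
      ← Finset.mul_prod_erase _ _ hlmem, hconst1]
    have e1 : A j j = x j := by simp [hA]
    have e2 : A l l = y l := by simp [hA, hjl.symm]
    rw [e1, e2]
  have hprod2 : (∏ m, A (Equiv.swap j l m) m) = x l * (y j * d ^ (n - 2)) := by
    rw [← Finset.mul_prod_erase univ _ (Finset.mem_univ j),
      ← Finset.mul_prod_erase _ _ hlmem, hconst2]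
    have e1 : A (Equiv.swap j l j) j = x l := by simp [hA, Equiv.swap_apply_left]
    have e2 : A (Equiv.swap j l l) l = y j := by simp [hA, Equiv.swap_apply_right, hjl.symm]
    rw [e1, e2]
  rw [Finset.sum_pair (Ne.symm hswap)]
  have e1 : (Equiv.Perm.sign (1 : Equiv.Perm (Fin n))) • (∏ m, A ((1 : Equiv.Perm (Fin n)) m) m)
      = x j * (y l * d ^ (n - 2)) := by
    simp only [Equiv.Perm.sign_one, one_smul, Equiv.Perm.one_apply]
    exact hprod1
  have e2 : (Equiv.Perm.sign (Equiv.swap j l)) • (∏ m, A (Equiv.swap j l m) m)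
      = -(x l * (y j * d ^ (n - 2))) := by
    rw [Equiv.Perm.sign_swap hjl, hprod2]
    simp
  rw [e1, e2]
  ring

lemma aux_key {F : Type*} [CommRing F] [IsDomain F] {n : ℕ} (hn : 2 ≤ n)
    (M : Matrix (Fin n) (Fin n) F) (hM : M.det ≠ 0) (i k j l : Fin n) (hjl : j ≠ l) :
    M.det * (Matrix.of fun m b : Fin n => if b = j then (if m = i then 1 else 0)
        else if b = l then (if m = k then 1 else 0) else M m b).det
      = M.adjugate j i * M.adjugate l k - M.adjugate l i * M.adjugate j k := by
  set B : Matrix (Fin n) (Fin n) F := Matrix.of fun m b : Fin n =>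
    if b = j then (if m = i then 1 else 0)
      else if b = l then (if m = k then 1 else 0) else M m b with hB
  set N := M.adjugate with hN
  have hAB : N * B = Matrix.of (fun m b : Fin n => if b = j then N m i
      else if b = l then N m k else if m = b then M.det else 0) := by
    ext a b
    rw [Matrix.mul_apply]
    rcases eq_or_ne b j with rfl | hbj
    · simp [hB, mul_ite]
    rcases eq_or_ne b l with rfl | hbl
    · simp [hB, hbj, mul_ite]
    · have : ∑ m, N a m * B m b = (N * M) a b := by
        rw [Matrix.mul_apply]
        refine Finset.sum_congr rfl fun m _ => ?_
        simp [hB, hbj, hbl]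
      rw [this, hN, Matrix.adjugate_mul]
      simp [Matrix.one_apply, Matrix.of_apply, hbj, hbl]
  have hdet : N.det * B.det = M.det ^ (n - 2) * (N j i * N l k - N l i * N j k) := by
    rw [← Matrix.det_mul, hAB, aux_det_special hjl]
  rw [hN, Matrix.det_adjugate, Fintype.card_fin] at hdet
  have hpow : M.det ^ (n - 1) = M.det ^ (n - 2) * M.det := by
    rw [← pow_succ]
    congr 1
    omega
  rw [hpow, mul_assoc] at hdet
  exact mul_left_cancel₀ (pow_ne_zero (n - 2) hM) hdet

theorem stmt_6 (R : Type*) [CommRing R] (n : ℕ) (hn : 2 ≤ n)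
    (M : Matrix (Fin n) (Fin n) R) (i k j l : Fin n) (hik : i ≠ k) (hjl : j ≠ l) :
    M.det ∣ (M.adjugate i j * M.adjugate k l - M.adjugate i l * M.adjugate k j) := by
  set S := MvPolynomial (Fin n × Fin n) ℤ
  set X : Matrix (Fin n) (Fin n) S :=
    Matrix.of fun a b : Fin n => MvPolynomial.X (a, b) with hXdef
  have hX : X.det ≠ 0 := by
    intro h
    have h2 := congrArg (MvPolynomial.eval (fun p : Fin n × Fin n => if p.1 = p.2 then (1 : ℤ) else 0)) h
    rw [RingHom.map_det, map_zero] at h2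
    have h3 : (MvPolynomial.eval (fun p : Fin n × Fin n => if p.1 = p.2 then (1 : ℤ) else 0)).mapMatrix X
        = (1 : Matrix (Fin n) (Fin n) ℤ) := by
      ext a b
      simp [hXdef, Matrix.one_apply]
    rw [h3, Matrix.det_one] at h2
    exact one_ne_zero h2
  have key := aux_key hn X hX j l i k hik
  set φ : S →+* R := MvPolynomial.eval₂Hom (Int.castRingHom R) (fun p : Fin n × Fin n => M p.1 p.2) with hφ
  have hφX : φ.mapMatrix X = M := by
    ext a b
    simp only [RingHom.mapMatrix_apply, Matrix.map_apply, hXdef, Matrix.of_apply, hφ]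
    exact MvPolynomial.eval₂Hom_X' _ _ (a, b)
  have h1 : φ X.det = M.det := by rw [RingHom.map_det, hφX]
  have h2 : ∀ a b : Fin n, φ (X.adjugate a b) = M.adjugate a b := by
    intro a b
    calc φ (X.adjugate a b) = (φ.mapMatrix X.adjugate) a b := rfl
      _ = (Matrix.adjugate (φ.mapMatrix X)) a b := by rw [RingHom.map_adjugate]
      _ = M.adjugate a b := by rw [hφX]
  refine ⟨φ (Matrix.of fun m b : Fin n => if b = i then (if m = j then 1 else 0)
      else if b = k then (if m = l then 1 else 0) else X m b).det, ?_⟩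
  have h3 := congrArg φ key
  rw [_root_.map_mul, _root_.map_sub, _root_.map_mul, _root_.map_mul, h1, h2, h2, h2, h2] at h3
  linear_combination -h3
end

section
/- Let n ≥ 2, d ≥ 2 with gcd(n,d) = 1, and let a_1, ..., a_{d−1} ∈ [0, n−1] with a_d = 0. Define S = { (Σ_{j=1}^{d−1} a_j) + n(m − Σ_{j=1}^{d−1} floor((a_j + e)/n)) + d·e : e ∈ [0, n−1], m ≥ 0 }. Then the complement of S in the nonnegative integers has exactly (n−1)(d−1)/2 elements. -/
open Finset in
lemma aux_img (n : ℕ) (g : ℕ → ℕ) (hlt : ∀ e < n, g e < n)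
    (hinj : ∀ e1 < n, ∀ e2 < n, g e1 = g e2 → e1 = e2) :
    (Finset.range n).image g = Finset.range n := by
  apply Finset.eq_of_subset_of_card_le
  · intro x hx
    simp only [Finset.mem_image, Finset.mem_range] at hx ⊢
    obtain ⟨e, he, rfl⟩ := hx
    exact hlt e he
  · rw [Finset.card_image_of_injOn]
    intro e1 he1 e2 he2 hg
    exact hinj e1 (Finset.mem_range.mp he1) e2 (Finset.mem_range.mp he2) hg

open Finset in
lemma aux_sum (n : ℕ) (g : ℕ → ℕ) (hlt : ∀ e < n, g e < n)
    (hinj : ∀ e1 < n, ∀ e2 < n, g e1 = g e2 → e1 = e2) :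
    ∑ e ∈ Finset.range n, g e = ∑ e ∈ Finset.range n, e := by
  conv_rhs => rw [← aux_img n g hlt hinj]
  rw [Finset.sum_image]
  intro e1 he1 e2 he2 hg
  exact hinj e1 (Finset.mem_range.mp he1) e2 (Finset.mem_range.mp he2) hg

theorem stmt_9 (n d : ℕ) (hn : 2 ≤ n) (hd : 2 ≤ d) (h : Nat.Coprime n d)
    (a : Fin (d - 1) → ℕ) (ha : ∀ j, a j ≤ n - 1) :
    {x : ℤ | 0 ≤ x ∧ x ∉
      {y : ℤ | ∃ e : ℕ, e < n ∧ ∃ m : ℕ,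
        y = (∑ j, (a j : ℤ)) + n * ((m : ℤ) - ∑ j, ((a j + e : ℤ) / n)) + d * e}}.ncard
      = (n - 1) * (d - 1) / 2 := by
  have hn0 : 0 < n := by omega
  set F : ℕ → ℕ := fun e => (∑ j, (a j + e) % n) + e with hF
  -- residue of F e
  have hFmod : ∀ e, F e % n = ((∑ j, a j) + d * e) % n := by
    intro e
    have h1 : (∑ j, (a j + e) % n) ≡ (∑ j, (a j + e)) [MOD n] :=
      (Finset.sum_nat_mod _ _ _).symm
    have h2 : (∑ j : Fin (d-1), (a j + e)) = (∑ j, a j) + (d-1) * e := by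
      rw [Finset.sum_add_distrib, Finset.sum_const, Finset.card_univ, Fintype.card_fin,
        smul_eq_mul]
    have h3 : (d - 1) * e + e = d * e := by
      have hd1 : d - 1 + 1 = d := by omega
      calc (d-1)*e + e = ((d-1)+1)*e := by ring
        _ = d * e := by rw [hd1]
    calc F e % n = ((∑ j, (a j + e) % n) + e) % n := rfl
      _ = ((∑ j, (a j + e)) + e) % n := h1.add_right e
      _ = ((∑ j, a j) + d * e) % n := by rw [h2, add_assoc, h3]
  -- injectivity of residues
  have hinj : ∀ e1 < n, ∀ e2 < n, F e1 % n = F e2 % n → e1 = e2 := by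
    intro e1 he1 e2 he2 heq
    rw [hFmod, hFmod] at heq
    have hmeq : (∑ j, a j) + d * e1 ≡ (∑ j, a j) + d * e2 [MOD n] := heq
    have h4 : d * e1 ≡ d * e2 [MOD n] := Nat.ModEq.add_left_cancel' _ hmeq
    exact (Nat.ModEq.cancel_left_of_coprime h h4).eq_of_lt_of_lt he1 he2
  have hFlt : ∀ e < n, F e % n < n := fun e _ => Nat.mod_lt _ hn0
  -- surjectivity of residues
  have hsurj : ∀ r < n, ∃ e < n, F e % n = r := by
    intro r hr
    have himg := aux_img n (fun e => F e % n) hFlt hinj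
    have : r ∈ (Finset.range n).image (fun e => F e % n) := by
      rw [himg]; exact Finset.mem_range.mpr hr
    simpa using this
  -- the key membership characterization
  have hS : ∀ y : ℤ, (∃ e : ℕ, e < n ∧ ∃ m : ℕ,
        y = (∑ j, (a j : ℤ)) + n * ((m : ℤ) - ∑ j, ((a j + e : ℤ) / n)) + d * e)
      ↔ ∃ e : ℕ, e < n ∧ ∃ m : ℕ, y = ((F e : ℤ) + n * m) := by
    intro y
    have key : ∀ e m : ℕ, (∑ j, (a j : ℤ)) + n * ((m : ℤ) - ∑ j, ((a j + e : ℤ) / n)) + d * e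
        = (F e : ℤ) + n * m := by
      intro e m
      have hdiv : ∀ j : Fin (d-1), ((a j : ℤ) + e) / n = (((a j + e) / n : ℕ) : ℤ) := by
        intro j
        rw [← Nat.cast_add]
        exact (Int.natCast_ediv (a j + e) n).symm
      have hsum : (∑ j, ((a j : ℤ) + e)) =
          n * (∑ j, (((a j + e) / n : ℕ) : ℤ)) + ∑ j, ((((a j + e) % n : ℕ)) : ℤ) := by
        rw [Finset.mul_sum, ← Finset.sum_add_distrib]
        refine Finset.sum_congr rfl (fun j _ => ?_)
        exact_mod_cast (Nat.div_add_mod (a j + e) n).symm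
      have hsum2 : (∑ j, ((a j : ℤ) + e)) = (∑ j, (a j : ℤ)) + ((d : ℤ) - 1) * e := by
        rw [Finset.sum_add_distrib, Finset.sum_const, Finset.card_univ, Fintype.card_fin]
        have hc : ((d - 1 : ℕ) : ℤ) = (d : ℤ) - 1 := by
          have h1d : 1 ≤ d := by omega
          push_cast [h1d]; ring
        rw [nsmul_eq_mul, hc]
      have hFcast : (F e : ℤ) = (∑ j, ((((a j + e) % n : ℕ)) : ℤ)) + e := by
        simp [hF, Nat.cast_sum]
      rw [hFcast]
      simp only [hdiv]
      linarith [hsum, hsum2]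
    constructor
    · rintro ⟨e, he, m, rfl⟩
      exact ⟨e, he, m, key e m⟩
    · rintro ⟨e, he, m, rfl⟩
      exact ⟨e, he, m, (key e m).symm⟩
  -- the complement finset
  set T : Finset ℕ := (Finset.range n).biUnion
    (fun e => (Finset.range (F e / n)).image (fun k => F e % n + n * k)) with hT
  have hTmem : ∀ x : ℕ, x ∈ T ↔ ∃ e < n, ∃ k < F e / n, x = F e % n + n * k := by
    intro x
    rw [hT]
    simp only [Finset.mem_biUnion, Finset.mem_range, Finset.mem_image]
    constructor
    · rintro ⟨e, he, k, hk, rfl⟩; exact ⟨e, he, k, hk, rfl⟩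
    · rintro ⟨e, he, k, hk, rfl⟩; exact ⟨e, he, k, hk, rfl⟩
  -- set equality
  have hCset : {x : ℤ | 0 ≤ x ∧ x ∉
      {y : ℤ | ∃ e : ℕ, e < n ∧ ∃ m : ℕ,
        y = (∑ j, (a j : ℤ)) + n * ((m : ℤ) - ∑ j, ((a j + e : ℤ) / n)) + d * e}}
      = ((↑) : ℕ → ℤ) '' ↑T := by
    ext x
    simp only [Set.mem_setOf_eq, Set.mem_image, Finset.mem_coe]
    constructor
    · rintro ⟨hx0, hxS⟩
      obtain ⟨x', rfl⟩ := Int.eq_ofNat_of_zero_le hx0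
      rw [hS] at hxS
      push_neg at hxS
      have hnot : ∀ e < n, ∀ m : ℕ, x' ≠ F e + n * m := by
        intro e he m hx
        exact hxS e he m (by push_cast [hx]; ring)
      refine ⟨x', ?_, rfl⟩
      have hrlt : x' % n < n := Nat.mod_lt _ hn0
      obtain ⟨e, he, hre⟩ := hsurj (x' % n) hrlt
      have hdm : n * (x' / n) + x' % n = x' := Nat.div_add_mod x' n
      have hdm2 : n * (F e / n) + F e % n = F e := Nat.div_add_mod (F e) n
      rw [hTmem]
      by_cases hlt : x' < F e
      · refine ⟨e, he, x' / n, ?_, ?_⟩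
        · refine Nat.lt_of_mul_lt_mul_left (a := n) ?_
          linarith [hdm, hdm2, hre, hlt]
        · rw [hre, Nat.add_comm]; exact hdm.symm
      · exfalso
        push_neg at hlt
        have hle : F e / n ≤ x' / n := by
          refine Nat.le_of_mul_le_mul_left ?_ hn0
          linarith [hdm, hdm2, hre, hlt]
        refine hnot e he (x' / n - F e / n) ?_
        have hz : ((x' / n - F e / n : ℕ) : ℤ) = ((x' / n : ℕ) : ℤ) - ((F e / n : ℕ) : ℤ) := by
          push_cast [hle]; ring
        have h1 : ((n : ℤ)) * ((x' / n : ℕ) : ℤ) + ((x' % n : ℕ) : ℤ) = (x' : ℤ) := by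
          exact_mod_cast hdm
        have h2 : ((n : ℤ)) * ((F e / n : ℕ) : ℤ) + ((F e % n : ℕ) : ℤ) = ((F e : ℕ) : ℤ) := by
          exact_mod_cast hdm2
        have h3 : ((F e % n : ℕ) : ℤ) = ((x' % n : ℕ) : ℤ) := by exact_mod_cast hre
        have : (x' : ℤ) = ((F e : ℕ) : ℤ) + n * ((x' / n - F e / n : ℕ) : ℤ) := by
          rw [hz]; linarith
        exact_mod_cast this
    · rintro ⟨x', hx', rfl⟩
      refine ⟨by positivity, ?_⟩
      rw [hS ((x':ℕ):ℤ)]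
      rintro ⟨e', he', m, hmeq⟩
      rw [hTmem] at hx'
      obtain ⟨e, he, k, hk, hxeq⟩ := hx'
      have hx'nat : x' = F e' + n * m := by exact_mod_cast hmeq
      have hmod1 : x' % n = F e % n := by
        rw [hxeq, Nat.add_mul_mod_self_left, Nat.mod_mod_of_dvd _ dvd_rfl]
      have hmod2 : x' % n = F e' % n := by
        rw [hx'nat, Nat.add_mul_mod_self_left]
      have hee : e = e' := hinj e he e' he' (hmod1.symm.trans hmod2)
      subst hee
      have hdm2 : n * (F e / n) + F e % n = F e := Nat.div_add_mod (F e) n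
      have hmul : n * k < n * (F e / n) := Nat.mul_lt_mul_of_le_of_lt (le_refl n) hk hn0
      have hnm : 0 ≤ n * m := Nat.zero_le _
      linarith [hxeq, hx'nat, hdm2, hmul, hnm]
  rw [hCset, Set.ncard_image_of_injective _ (fun p q hpq => by exact_mod_cast hpq),
    Set.ncard_coe_finset]
  -- count T
  have hcard : T.card = ∑ e ∈ Finset.range n, F e / n := by
    rw [hT, Finset.card_biUnion]
    · refine Finset.sum_congr rfl (fun e he => ?_)
      rw [Finset.card_image_of_injective _ ?_, Finset.card_range]
      intro k1 k2 hkk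
      simp only at hkk
      have : n * k1 = n * k2 := by omega
      exact Nat.eq_of_mul_eq_mul_left hn0 this
    · intro e1 he1 e2 he2 hne
      rw [Function.onFun, Finset.disjoint_left]
      intro x hx1 hx2
      simp only [Finset.mem_image, Finset.mem_range] at hx1 hx2
      obtain ⟨k1, hk1, rfl⟩ := hx1
      obtain ⟨k2, hk2, heq⟩ := hx2
      apply hne
      refine hinj e1 (Finset.mem_range.mp he1) e2 (Finset.mem_range.mp he2) ?_
      have m1 : (F e1 % n + n * k1) % n = F e1 % n := by
        rw [Nat.add_mul_mod_self_left, Nat.mod_mod_of_dvd _ dvd_rfl]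
      have m2 : (F e2 % n + n * k2) % n = F e2 % n := by
        rw [Nat.add_mul_mod_self_left, Nat.mod_mod_of_dvd _ dvd_rfl]
      rw [← m1, ← m2, heq]
  rw [hcard]
  -- sum computation
  set G := ∑ e ∈ Finset.range n, e with hG
  have hsummod : ∑ e ∈ Finset.range n, F e % n = G := aux_sum n (fun e => F e % n) hFlt hinj
  have hshift : ∀ j : Fin (d-1), ∑ e ∈ Finset.range n, (a j + e) % n = G := by
    intro j
    refine aux_sum n (fun e => (a j + e) % n) (fun e _ => Nat.mod_lt _ hn0) ?_
    intro e1 he1 e2 he2 heq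
    have : a j + e1 ≡ a j + e2 [MOD n] := heq
    exact (Nat.ModEq.add_left_cancel' _ this).eq_of_lt_of_lt he1 he2
  have htot : ∑ e ∈ Finset.range n, F e = (d-1) * G + G := by
    simp only [hF]
    rw [Finset.sum_add_distrib]
    congr 1
    rw [Finset.sum_comm]
    calc ∑ j : Fin (d-1), ∑ e ∈ Finset.range n, (a j + e) % n
        = ∑ _j : Fin (d-1), G := Finset.sum_congr rfl (fun j _ => hshift j)
      _ = (d-1) * G := by
          rw [Finset.sum_const, Finset.card_univ, Fintype.card_fin, smul_eq_mul]
  have hdiveq : ∑ e ∈ Finset.range n, F e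
      = n * (∑ e ∈ Finset.range n, F e / n) + ∑ e ∈ Finset.range n, F e % n := by
    rw [Finset.mul_sum, ← Finset.sum_add_distrib]
    exact Finset.sum_congr rfl (fun e _ => (Nat.div_add_mod _ _).symm)
  set A := ∑ e ∈ Finset.range n, F e / n with hA
  have hnA : n * A = (d-1) * G := by linarith [htot, hdiveq, hsummod]
  have g2 : G * 2 = n * (n-1) := Finset.sum_range_id_mul_two n
  have hnAA : n * (2 * A) = n * ((d-1) * (n-1)) := by
    calc n * (2 * A) = (n * A) * 2 := by ring
      _ = ((d-1) * G) * 2 := by rw [hnA]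
      _ = (d-1) * (G * 2) := by ring
      _ = (d-1) * (n * (n-1)) := by rw [g2]
      _ = n * ((d-1) * (n-1)) := by ring
  have h2A : 2 * A = (d-1) * (n-1) := Nat.eq_of_mul_eq_mul_left hn0 hnAA
  have h2A' : 2 * A = (n-1) * (d-1) := by rw [h2A]; ring
  omega
end

section
/- Let n, d ≥ 2 be coprime integers, g = (n−1)(d−1)/2, and let c_i be the coefficient of T^i in (1 + T + ··· + T^{n−1})^{d−1}. Then Σ_{i=0}^{2g} binom(2g−i, 2)·c_i = (g²/2 + g(n−5)/12)·n^{d−1}. -/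
open Polynomial Finset

lemma gauss1 (n : ℕ) : ∑ i ∈ range n, (i:ℚ) = n*((n:ℚ)-1)/2 := by
  induction n with
  | zero => simp
  | succ k ih => rw [Finset.sum_range_succ, ih]; push_cast; ring

lemma gauss2 (n : ℕ) : ∑ i ∈ range n, (i:ℚ)*((i:ℚ)-1) = n*((n:ℚ)-1)*((n:ℚ)-2)/3 := by
  induction n with
  | zero => simp
  | succ k ih => rw [Finset.sum_range_succ, ih]; push_cast; ring

lemma sum_coeff_eval (P : ℚ[X]) (N : ℕ) (h : P.natDegree ≤ N) :
    ∑ i ∈ range (N+1), P.coeff i = P.eval 1 := by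
  rw [Polynomial.eval_eq_sum_range' (Nat.lt_succ_of_le h)]
  simp

lemma sum_i_coeff (P : ℚ[X]) (N : ℕ) (h : P.natDegree ≤ N) :
    ∑ i ∈ range (N+1), (i:ℚ) * P.coeff i = (derivative P).eval 1 := by
  have hd : (derivative P).natDegree ≤ N := le_trans (natDegree_derivative_le P) (by omega)
  rw [Polynomial.eval_eq_sum_range' (Nat.lt_succ_of_le hd)]
  simp only [one_pow, mul_one, coeff_derivative]
  rw [Finset.sum_range_succ' (fun i => (i:ℚ) * P.coeff i)]
  rw [Finset.sum_range_succ (fun i => P.coeff (i+1) * ((i:ℚ)+1))]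
  have h0 : P.coeff (N+1) = 0 := coeff_eq_zero_of_natDegree_lt (by omega)
  rw [h0]
  simp only [mul_zero, add_zero, Nat.cast_zero, zero_mul]
  exact Finset.sum_congr rfl (fun i _ => by push_cast; ring)

lemma sum_ii_coeff (P : ℚ[X]) (N : ℕ) (h : P.natDegree ≤ N) :
    ∑ i ∈ range (N+1), (i:ℚ) * ((i:ℚ)-1) * P.coeff i = (derivative (derivative P)).eval 1 := by
  have hd : (derivative P).natDegree ≤ N := le_trans (natDegree_derivative_le P) (by omega)
  rw [← sum_i_coeff _ N hd]
  rw [Finset.sum_range_succ' (fun i => (i:ℚ) * ((i:ℚ)-1) * P.coeff i)]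
  rw [Finset.sum_range_succ (fun i => (i:ℚ) * (derivative P).coeff i)]
  have h0 : P.coeff (N+1) = 0 := coeff_eq_zero_of_natDegree_lt (by omega)
  simp only [coeff_derivative, h0, zero_mul, mul_zero, add_zero, Nat.cast_zero, zero_sub]
  exact Finset.sum_congr rfl (fun i _ => by push_cast; ring)

lemma geomQ_eval (n : ℕ) : ((∑ i ∈ range n, (X:ℚ[X])^i)).eval 1 = n := by
  simp [eval_finset_sum]

lemma geomQ_deriv (n : ℕ) :
    (derivative (∑ i ∈ range n, (X:ℚ[X])^i)).eval 1 = n*((n:ℚ)-1)/2 := by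
  rw [derivative_sum]
  simp [derivative_X_pow, eval_finset_sum, gauss1]

lemma geomQ_deriv2 (n : ℕ) :
    (derivative (derivative (∑ i ∈ range n, (X:ℚ[X])^i))).eval 1
      = n*((n:ℚ)-1)*((n:ℚ)-2)/3 := by
  rw [derivative_sum, derivative_sum]
  simp [derivative_X_pow, eval_finset_sum, derivative_natCast_mul]
  rw [← gauss2]
  refine Finset.sum_congr rfl (fun i _ => ?_)
  cases i with
  | zero => simp
  | succ k => push_cast [Nat.add_sub_cancel]; ring

open Polynomial in
theorem stmt_11 (n d g : ℕ) (hn : 2 ≤ n) (hd : 2 ≤ d) (h : Nat.Coprime n d)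
    (hg : 2 * g = (n - 1) * (d - 1))
    (c : ℕ → ℤ) (hc : ∀ i, c i = ((∑ i ∈ Finset.range n, (X : ℤ[X]) ^ i) ^ (d - 1)).coeff i) :
    ∑ i ∈ Finset.range (2 * g + 1), ((2 * g - i).choose 2 : ℚ) * (c i : ℚ) =
      ((g : ℚ) ^ 2 / 2 + (g : ℚ) * ((n : ℚ) - 5) / 12) * (n : ℚ) ^ (d - 1) := by
  set Q : ℚ[X] := ∑ i ∈ Finset.range n, (X:ℚ[X]) ^ i with hQdef
  set P : ℚ[X] := Q ^ (d - 1) with hPdef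
  have hcq : ∀ i, (c i : ℚ) = P.coeff i := by
    intro i
    rw [hc]
    rw [show P = ((∑ i ∈ Finset.range n, (X:ℤ[X])^i)^(d-1)).map (Int.castRingHom ℚ) by
      simp [hPdef, hQdef, Polynomial.map_pow, Polynomial.map_sum, Polynomial.map_X]]
    rw [coeff_map]
    simp
  have hQdeg : Q.natDegree ≤ n - 1 := by
    apply Polynomial.natDegree_sum_le_of_forall_le
    intro i hi
    simp only [natDegree_X_pow]
    exact Nat.le_sub_one_of_lt (mem_range.mp hi)
  have hdeg : P.natDegree ≤ 2*g := by
    calc P.natDegree ≤ (d-1) * Q.natDegree := natDegree_pow_le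
      _ ≤ (d-1) * (n-1) := Nat.mul_le_mul_left _ hQdeg
      _ = 2*g := by rw [Nat.mul_comm, ← hg]
  have hQ0 : Q.eval 1 = n := geomQ_eval n
  have hQ1 : (derivative Q).eval 1 = n*((n:ℚ)-1)/2 := geomQ_deriv n
  have hQ2 : (derivative (derivative Q)).eval 1 = n*((n:ℚ)-1)*((n:ℚ)-2)/3 := geomQ_deriv2 n
  have hP0 : P.eval 1 = (n:ℚ)^(d-1) := by rw [hPdef, eval_pow, hQ0]
  have hP1 : (derivative P).eval 1 = ((d-1:ℕ):ℚ) * (n:ℚ)^(d-2) * ((n:ℚ)*((n:ℚ)-1)/2) := by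
    rw [hPdef, derivative_pow]
    rw [show d-1-1 = d-2 from by omega]
    simp only [eval_mul, eval_C, eval_pow, hQ0, hQ1]
  have hP2 : (derivative (derivative P)).eval 1 =
      ((d-1:ℕ):ℚ) * (((d-2:ℕ):ℚ) * (n:ℚ)^(d-3) * ((n:ℚ)*((n:ℚ)-1)/2) * ((n:ℚ)*((n:ℚ)-1)/2)
        + (n:ℚ)^(d-2) * ((n:ℚ)*((n:ℚ)-1)*((n:ℚ)-2)/3)) := by
    rw [hPdef, derivative_pow, derivative_mul, derivative_mul, derivative_C, zero_mul, zero_add,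
      derivative_pow]
    rw [show d-1-1 = d-2 from by omega, show d-2-1 = d-3 from by omega]
    simp only [eval_add, eval_mul, eval_C, eval_pow, hQ0, hQ1, hQ2]
    ring
  have key : ∀ i ∈ Finset.range (2*g+1), ((2*g-i).choose 2 : ℚ) * (c i:ℚ) =
      (1/2) * ((i:ℚ)*((i:ℚ)-1) * P.coeff i) - (2*(g:ℚ)-1) * ((i:ℚ) * P.coeff i)
        + ((g:ℚ)*(2*(g:ℚ)-1)) * P.coeff i := by
    intro i hi
    have hi' : i ≤ 2*g := by have := mem_range.mp hi; omega
    rw [hcq i, Nat.cast_choose_two, Nat.cast_sub hi']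
    push_cast
    ring
  rw [Finset.sum_congr rfl key]
  rw [Finset.sum_add_distrib, Finset.sum_sub_distrib, ← Finset.mul_sum, ← Finset.mul_sum,
    ← Finset.mul_sum]
  rw [sum_ii_coeff P (2*g) hdeg, sum_i_coeff P (2*g) hdeg, sum_coeff_eval P (2*g) hdeg]
  rw [hP0, hP1, hP2]
  have hgq : (g:ℚ) = ((n:ℚ)-1)*((d:ℚ)-1)/2 := by
    have h2 : ((2*g:ℕ):ℚ) = (((n-1)*(d-1):ℕ):ℚ) := by exact_mod_cast congrArg (Nat.cast (R := ℚ)) hg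
    rw [Nat.cast_mul, Nat.cast_mul, Nat.cast_sub (show 1 ≤ n by omega),
      Nat.cast_sub (show 1 ≤ d by omega)] at h2
    push_cast at h2
    linarith
  rw [Nat.cast_sub (show 1 ≤ d by omega), Nat.cast_sub (show 2 ≤ d by omega)]
  rw [hgq]
  push_cast
  obtain rfl | hk3 : d = 2 ∨ 3 ≤ d := by omega
  · norm_num
    ring
  · obtain ⟨k, rfl⟩ : ∃ k, d = k+3 := ⟨d-3, by omega⟩
    rw [show k+3-1 = k+2 from rfl, show k+3-2 = k+1 from rfl, show k+3-3 = k from rfl]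
    push_cast
    ring
end

section
/- Let K be a field, n ≥ 2, d ≥ 2 with the characteristic of K not dividing n, and suppose K contains a primitive n-th root of unity ζ. Let r_1, ..., r_d ∈ K and let s_j denote the j-th elementary symmetric polynomial in r_1, ..., r_d (with s_m = 0 for m outside [0,d]). Working in L = K[T], define for 1 ≤ k ≤ n the polynomial λ_k = Π_{i=1}^d (r_i + ζ^k T), and define the n×n matrix A over K[T^n] whose (i,j)-entry is A_{d+i−j} where A_ℓ(x) = Σ_{k≥0} (−1)^{(n−1)k} s_{ℓ−nk} x^k evaluated at x = −(−T)^n. Then for each k, the vector v_k = (1, ζ^k T, ζ^{2k}T², ..., ζ^{(n−1)k} T^{n−1})ᵀ satisfies A·v_k = λ_k·v_k. -/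
open Polynomial Finset

/-- The `j`-th elementary symmetric polynomial of `r 0, ..., r (d-1)`, with the
convention that it is `0` for `j` outside `[0, d]`. -/
noncomputable def esymZ {K : Type*} [CommRing K] {d : ℕ} (r : Fin d → K) (j : ℤ) : K :=
  if 0 ≤ j then ∑ t ∈ Finset.univ.powersetCard j.toNat, ∏ i ∈ t, r i else 0

/-- `A_ℓ(x) = Σ_{k ≥ 0} (−1)^{(n−1)k} s_{ℓ−nk} x^k`, a finite sum since `s_m = 0`
for `m < 0`. -/
noncomputable def Apoly {K : Type*} [CommRing K] {d : ℕ} (n : ℕ) (r : Fin d → K) (ℓ : ℤ) :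
    K[X] :=
  ∑ k ∈ Finset.range (ℓ.toNat / n + 1),
    ((-1 : K[X]) ^ ((n - 1) * k)) * C (esymZ r (ℓ - n * k)) * X ^ k


lemma esymZ_neg {K : Type*} [CommRing K] {d : ℕ} (r : Fin d → K) {j : ℤ} (h : j < 0) :
    esymZ r j = 0 := by
  rw [esymZ, if_neg (by omega)]

lemma esymZ_gt {K : Type*} [CommRing K] {d : ℕ} (r : Fin d → K) {j : ℤ} (h : (d : ℤ) < j) :
    esymZ r j = 0 := by
  rw [esymZ, if_pos (by omega)]
  have : (Finset.univ : Finset (Fin d)).powersetCard j.toNat = ∅ := by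
    rw [Finset.powersetCard_eq_empty]
    simp only [Finset.card_univ, Fintype.card_fin]
    omega
  rw [this, Finset.sum_empty]

lemma esymZ_natCast {K : Type*} [CommRing K] {d : ℕ} (r : Fin d → K) (c : ℕ) :
    esymZ r (c : ℤ) = ∑ t ∈ Finset.univ.powersetCard c, ∏ i ∈ t, r i := by
  rw [esymZ, if_pos (by positivity), Int.toNat_natCast]

lemma Apoly_comp {K : Type*} [CommRing K] {d : ℕ} {n : ℕ} (hn : 1 ≤ n) (r : Fin d → K) (ℓ : ℤ) :
    (Apoly n r ℓ).comp (-(-X) ^ n) =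
      ∑ m ∈ Finset.range (ℓ.toNat / n + 1), C (esymZ r (ℓ - n * m)) * X ^ (n * m) := by
  rw [Apoly]
  have hrw : ∀ p : K[X], p.comp (-(-X) ^ n) = Polynomial.compRingHom (-(-X) ^ n) p := fun _ => rfl
  rw [hrw, map_sum]
  refine Finset.sum_congr rfl fun m _ => ?_
  rw [← hrw]
  show ((-1 : K[X]) ^ ((n - 1) * m) * C (esymZ r (ℓ - n * m)) * X ^ m).comp (-(-X) ^ n) = _
  rw [Polynomial.mul_comp, Polynomial.mul_comp, Polynomial.pow_comp, Polynomial.neg_comp,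
    Polynomial.one_comp, Polynomial.C_comp, Polynomial.pow_comp, Polynomial.X_comp]
  have h1 : (-(-X : K[X]) ^ n) ^ m = (-1) ^ ((n + 1) * m) * X ^ (n * m) := by
    rw [neg_pow (X : K[X]), ← neg_one_mul ((-1 : K[X]) ^ n * X ^ n)]
    rw [mul_pow, mul_pow, ← pow_mul, ← pow_mul, ← mul_assoc, ← pow_add]
    ring_nf
  have h2 : (n - 1) * m + (n + 1) * m = 2 * (n * m) := by
    cases n with
    | zero => omega
    | succ n' => simp only [Nat.succ_sub_one]; ring
  have h3 : (-1 : K[X]) ^ ((n - 1) * m) * (-1) ^ ((n + 1) * m) = 1 := by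
    rw [← pow_add, h2, pow_mul, neg_one_sq, one_pow]
  rw [h1]
  linear_combination (C (esymZ r (ℓ - (n : ℤ) * m)) * X ^ (n * m)) * h3

lemma CXpow_mul_CXpow {K : Type*} [CommRing K] (a b : K) (p q : ℕ) :
    (C a * X ^ p) * (C b * X ^ q) = C (a * b) * X ^ (p + q) := by
  rw [C_mul, pow_add]; ring

lemma rhs_coeff {K : Type*} [Field K] {d : ℕ} (ζ : K) (r : Fin d → K) (k i T : ℕ) :
    ((∏ m : Fin d, (C (r m) + C (ζ ^ k) * X)) * (C (ζ ^ (k * i)) * X ^ i)).coeff T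
      = esymZ r ((d : ℤ) + i - T) * ζ ^ (k * T) := by
  have step1 : (∏ m : Fin d, (C (r m) + C (ζ ^ k) * X)) * (C (ζ ^ (k * i)) * X ^ i)
      = ∑ t ∈ (Finset.univ : Finset (Fin d)).powerset,
          C ((∏ m ∈ t, r m) * (ζ ^ k) ^ (d - t.card) * ζ ^ (k * i))
            * X ^ ((d - t.card) + i) := by
    rw [Finset.prod_add, Finset.sum_mul]
    refine Finset.sum_congr rfl fun t ht => ?_
    have hc : (Finset.univ \ t).card = d - t.card := by
      rw [Finset.card_sdiff_of_subset (Finset.subset_univ t), Finset.card_univ, Fintype.card_fin]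
    rw [Finset.prod_const, hc, ← map_prod C (fun m => r m) t, mul_pow, ← C_pow, C_mul, C_mul,
      pow_add]
    ring
  rw [step1, Polynomial.finset_sum_coeff]
  simp only [coeff_C_mul, coeff_X_pow, mul_ite, mul_one, mul_zero]
  rw [Finset.powerset_card_biUnion, Finset.sum_biUnion ((Finset.pairwise_disjoint_powersetCard _).set_pairwise _), Finset.card_univ, Fintype.card_fin]
  have step2 : ∀ c ∈ Finset.range (d + 1),
      (∑ t ∈ (Finset.univ : Finset (Fin d)).powersetCard c,
        if T = d - t.card + i then (∏ m ∈ t, r m) * (ζ ^ k) ^ (d - t.card) * ζ ^ (k * i) else 0)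
      = if T = d - c + i then esymZ r (c : ℤ) * (ζ ^ k) ^ (d - c) * ζ ^ (k * i) else 0 := by
    intro c _
    have hcard : ∀ t ∈ (Finset.univ : Finset (Fin d)).powersetCard c, t.card = c :=
      fun t ht => (Finset.mem_powersetCard.mp ht).2
    rw [Finset.sum_congr rfl (fun t ht => by rw [hcard t ht])]
    split_ifs with h
    · rw [esymZ_natCast, Finset.sum_mul, Finset.sum_mul]
    · exact Finset.sum_const_zero
  rw [Finset.sum_congr rfl step2]
  by_cases hT1 : T < i
  · rw [Finset.sum_eq_zero (fun c _ => by rw [if_neg (by omega)]),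
      esymZ_gt r (by push_cast; omega), zero_mul]
  by_cases hT2 : d + i < T
  · rw [Finset.sum_eq_zero (fun c hc => by
      rw [if_neg (by have := Finset.mem_range.mp hc; omega)]),
      esymZ_neg r (by push_cast; omega), zero_mul]
  push_neg at hT1 hT2
  rw [Finset.sum_eq_single (d + i - T)]
  · rw [if_pos (by omega)]
    have h1 : ((d + i - T : ℕ) : ℤ) = (d : ℤ) + i - T := by push_cast; omega
    have h2 : d - (d + i - T) = T - i := by omega
    rw [h1, h2, mul_assoc]
    congr 1
    rw [← pow_mul, ← pow_add, ← Nat.mul_add, Nat.sub_add_cancel hT1]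
  · intro c hc hne
    rw [if_neg (by have := Finset.mem_range.mp hc; omega)]
  · intro h
    exact absurd (Finset.mem_range.mpr (by omega)) h

lemma lhs_coeff {K : Type*} [Field K] {n d : ℕ} (hn : 2 ≤ n) {ζ : K}
    (hζ : IsPrimitiveRoot ζ n) (r : Fin d → K) (k : ℕ) (i : Fin n) (T : ℕ) :
    (∑ j : Fin n,
        (∑ m ∈ Finset.range ((((d : ℤ) + i.1 - j.1).toNat) / n + 1),
          C (esymZ r (((d : ℤ) + i.1 - j.1) - n * m)) * X ^ (n * m))
          * (C (ζ ^ (k * j.1)) * X ^ (j.1))).coeff T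
      = esymZ r ((d : ℤ) + i.1 - T) * ζ ^ (k * T) := by
  have npos : 0 < n := by omega
  simp only [Finset.sum_mul, CXpow_mul_CXpow]
  rw [Polynomial.finset_sum_coeff]
  simp only [Polynomial.finset_sum_coeff, coeff_C_mul, coeff_X_pow, mul_ite, mul_one, mul_zero]
  have hdm : n * (T / n) + T % n = T := Nat.div_add_mod T n
  set j₀ : Fin n := ⟨T % n, Nat.mod_lt T npos⟩ with hj₀
  rw [Finset.sum_eq_single j₀]
  · have hidx : ((d : ℤ) + i.1 - j₀.1) - n * ((T / n : ℕ) : ℤ) = (d : ℤ) + i.1 - T := by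
      have h : ((n : ℤ)) * ((T / n : ℕ) : ℤ) + ((T % n : ℕ) : ℤ) = (T : ℤ) := by
        exact_mod_cast hdm
      have h' : ((j₀.1 : ℕ) : ℤ) = ((T % n : ℕ) : ℤ) := rfl
      rw [h']
      linarith [h]
    have hzeta : ζ ^ (k * j₀.1) = ζ ^ (k * T) := by
      conv_rhs => rw [← hdm]
      rw [show k * (n * (T / n) + T % n) = n * (k * (T / n)) + k * (T % n) by ring,
        pow_add, pow_mul ζ n (k * (T / n)), hζ.pow_eq_one, one_pow, one_mul]
    rw [Finset.sum_eq_single (T / n)]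
    · rw [if_pos (by exact hdm.symm), hidx, hzeta]
    · intro m _ hm
      rw [if_neg]
      intro hEq
      apply hm
      have : T / n = m := by
        have h2 : (n * m + j₀.1) / n = m + j₀.1 / n := Nat.mul_add_div npos m j₀.1
        have h3 : j₀.1 / n = 0 := Nat.div_eq_of_lt j₀.2
        rw [hEq, h2, h3, Nat.add_zero]
      omega
    · intro h
      rw [Finset.mem_range, not_lt] at h
      rw [if_pos hdm.symm, hidx]
      have hlt : ((d : ℤ) + i.1 - j₀.1).toNat < (T / n) * n :=
        (Nat.div_lt_iff_lt_mul npos).mp (by omega)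
      have hle : ((d : ℤ) + i.1 - j₀.1) ≤ (((d : ℤ) + i.1 - j₀.1).toNat : ℤ) :=
        Int.self_le_toNat _
      have hcast : ((((d : ℤ) + i.1 - j₀.1).toNat : ℕ) : ℤ) < (((T / n) * n : ℕ) : ℤ) := by
        exact_mod_cast hlt
      have hTn : ((((T / n) * n : ℕ)) : ℤ) + ((T % n : ℕ) : ℤ) = (T : ℤ) := by
        exact_mod_cast Nat.div_add_mod' T n
      rw [esymZ_neg r (by push_cast at hle hcast hTn ⊢; have hj' : ((j₀.1 : ℕ) : ℤ) = (T : ℤ) % n := Int.natCast_mod T n; linarith), zero_mul]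
  · intro j _ hj
    apply Finset.sum_eq_zero
    intro m _
    rw [if_neg]
    intro hEq
    apply hj
    apply Fin.ext
    have : (n * m + j.1) % n = j.1 % n := Nat.mul_add_mod n m j.1
    rw [Nat.mod_eq_of_lt j.2] at this
    show j.1 = T % n
    rw [hEq, this]
  · intro h
    exact absurd (Finset.mem_univ j₀) h

theorem stmt_14 (K : Type*) [Field K] (n d : ℕ) (hn : 2 ≤ n) (hd : 2 ≤ d)
    (hchar : (n : K) ≠ 0) (ζ : K) (hζ : IsPrimitiveRoot ζ n) (r : Fin d → K)
    (A : Matrix (Fin n) (Fin n) K[X])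
    (hA : ∀ i j : Fin n, A i j = (Apoly n r ((d : ℤ) + i.1 - j.1)).comp (-(-X) ^ n))
    (k : ℕ) (hk1 : 1 ≤ k) (hk2 : k ≤ n)
    (v : Fin n → K[X]) (hv : ∀ i : Fin n, v i = C (ζ ^ (k * i.1)) * X ^ i.1)
    (lam : K[X]) (hlam : lam = ∏ i : Fin d, (C (r i) + C (ζ ^ k) * X)) :
    A.mulVec v = lam • v := by
  funext i
  rw [Pi.smul_apply, smul_eq_mul, hlam, hv]
  have hmv : A.mulVec v i = ∑ j, A i j * v j := rfl
  rw [hmv]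
  refine Polynomial.ext fun T => ?_
  simp only [hA, hv, Apoly_comp (show 1 ≤ n by omega) r]
  rw [lhs_coeff hn hζ r k i T, rhs_coeff ζ r k i.1 T]
end
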